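/- The open set U := 𝔻_ℂ ∖ {1, 2, 3, 4, …, +∞} (removing all positive integers and the boundary point +∞ = (1)∞) satisfies N¹_∞(U) = S¹∞ ∖ {+∞}, hence U is regular at ∞. -/

import Mathlib

open Metric Filter

noncomputable section

/-- The radial compactification `𝔻_ℂ = ℂ ⊔ S¹∞` of `ℂ`. -/
abbrev DC := ℂ ⊕ Metric.sphere (0 : ℂ) 1

/-- The bijection from the closed unit disc to `𝔻_ℂ`: `z ↦ z/(1-|z|)` inside,
`z ↦ z∞` on the boundary circle. -/
noncomputable def phiDC : Metric.closedBall (0 : ℂ) 1 → DC :=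
  fun z =>
    if h : ‖(z : ℂ)‖ < 1 then
      Sum.inl ((1 - ‖(z : ℂ)‖)⁻¹ • (z : ℂ))
    else
      Sum.inr ⟨(z : ℂ), by
        have h1 : ‖(z : ℂ)‖ ≤ 1 := mem_closedBall_zero_iff.mp z.2
        exact mem_sphere_zero_iff_norm.mpr (le_antisymm h1 (not_lt.mp h))⟩

/-- The topology of `𝔻_ℂ`, transported from the closed unit disc via `phiDC`. -/
instance DCtop : TopologicalSpace DC :=
  TopologicalSpace.coinduced phiDC inferInstance

noncomputable def psiDC : DC → Metric.closedBall (0 : ℂ) 1 :=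
  fun p => match p with
  | Sum.inl z => ⟨(1 + ‖z‖)⁻¹ • z, by
      have h0 : (0:ℝ) < 1 + ‖z‖ := by positivity
      rw [mem_closedBall_zero_iff, norm_smul, norm_inv, Real.norm_eq_abs,
        abs_of_pos h0]
      rw [inv_mul_le_iff₀ h0]
      linarith [norm_nonneg z]⟩
  | Sum.inr x => ⟨(x : ℂ), by
      have := mem_sphere_zero_iff_norm.mp x.2
      rw [mem_closedBall_zero_iff, this]⟩

lemma psi_phi : ∀ w, psiDC (phiDC w) = w := by
  intro w
  by_cases h : ‖(w : ℂ)‖ < 1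
  · have h1 : (0:ℝ) < 1 - ‖(w : ℂ)‖ := by linarith
    simp only [phiDC, dif_pos h, psiDC]
    ext
    simp only [norm_smul, norm_inv, Real.norm_eq_abs, abs_of_pos h1]
    rw [smul_smul]
    have : (1 + (1 - ‖(w:ℂ)‖)⁻¹ * ‖(w:ℂ)‖)⁻¹ * (1 - ‖(w:ℂ)‖)⁻¹ = 1 := by
      rw [← mul_inv, mul_comm _ (1 - ‖(w:ℂ)‖), mul_add, mul_one,
        mul_inv_cancel_left₀ h1.ne', sub_add_cancel, inv_one]
    rw [this, one_smul]
  · simp only [phiDC, dif_neg h, psiDC]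

lemma phi_psi : ∀ p, phiDC (psiDC p) = p := by
  intro p
  match p with
  | Sum.inl z =>
    have h0 : (0:ℝ) < 1 + ‖z‖ := by positivity
    have hn : ‖(1 + ‖z‖)⁻¹ • z‖ = (1 + ‖z‖)⁻¹ * ‖z‖ := by
      rw [norm_smul, norm_inv, Real.norm_eq_abs, abs_of_pos h0]
    have hlt : ‖(1 + ‖z‖)⁻¹ • z‖ < 1 := by
      rw [hn, inv_mul_lt_iff₀ h0]; linarith [norm_nonneg z]
    simp only [phiDC, dif_pos (show ‖((psiDC (Sum.inl z)) : ℂ)‖ < 1 from hlt)]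
    simp only [psiDC]
    congr 1
    rw [hn, smul_smul]
    have : (1 - (1 + ‖z‖)⁻¹ * ‖z‖)⁻¹ * (1 + ‖z‖)⁻¹ = 1 := by
      rw [← mul_inv, mul_comm _ (1 + ‖z‖), mul_sub, mul_one,
        mul_inv_cancel_left₀ h0.ne', add_sub_cancel_right, inv_one]
    rw [this, one_smul]
  | Sum.inr x =>
    have hx : ‖(x : ℂ)‖ = 1 := mem_sphere_zero_iff_norm.mp x.2
    have : ¬ ‖(x : ℂ)‖ < 1 := by rw [hx]; exact lt_irrefl 1
    simp only [phiDC, dif_neg (show ¬ ‖((psiDC (Sum.inr x)) : ℂ)‖ < 1 from this)]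
    rfl

lemma phi_continuous : Continuous phiDC := continuous_coinduced_rng

lemma psi_continuous : Continuous psiDC := by
  rw [show DCtop = TopologicalSpace.coinduced phiDC inferInstance from rfl,
    continuous_coinduced_dom]
  have : psiDC ∘ phiDC = id := funext psi_phi
  rw [this]
  exact continuous_id

lemma tendsto_inl_inr (z : ℕ → ℂ) (x : Metric.sphere (0:ℂ) 1) :
    Tendsto (fun k => (Sum.inl (z k) : DC)) atTop (nhds (Sum.inr x)) ↔
    Tendsto (fun k => (1 + ‖z k‖)⁻¹ • z k) atTop (nhds (x : ℂ)) := by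
  constructor
  · intro h
    have h2 := (psi_continuous.tendsto _).comp h
    have h3 := (continuous_subtype_val.tendsto _).comp h2
    exact h3
  · intro h
    have h2 : Tendsto (fun k => psiDC (Sum.inl (z k))) atTop (nhds (psiDC (Sum.inr x))) := by
      rw [tendsto_subtype_rng]
      exact h
    have h3 := (phi_continuous.tendsto _).comp h2
    simpa only [Function.comp_def, phi_psi] using h3

/-- The circle at infinity `S¹∞ ⊂ 𝔻_ℂ`. -/
def Sinf : Set DC := Set.range Sum.inr

/-- The point `+∞ = (1)∞ ∈ S¹∞`. -/
def plusInfty : DC := Sum.inr ⟨1, by simp⟩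

/-- `clos¹_∞(A)` for `A ⊂ ℂ`: points `z∞ ∈ S¹∞` that are limits of sequences
`z_k ∈ A` with `|z_{k+1}|/|z_k| → 1`. -/
def closOneC (A : Set ℂ) : Set DC :=
  {p | (∃ x : Metric.sphere (0 : ℂ) 1, p = Sum.inr x) ∧ ∃ z : ℕ → ℂ,
    (∀ k, z k ∈ A) ∧ Tendsto (fun k => (Sum.inl (z k) : DC)) atTop (nhds p) ∧
    Tendsto (fun k => ‖z (k + 1)‖ / ‖z k‖) atTop (nhds 1)}

/-- `N¹_∞(U) := S¹∞ ∖ clos¹_∞(ℂ ∖ U)` for `U ⊂ 𝔻_ℂ`. -/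
def NOneC (U : Set DC) : Set DC :=
  Sinf \ closOneC {z : ℂ | (Sum.inl z : DC) ∉ U}

/-- The open set `U := 𝔻_ℂ ∖ {1, 2, 3, 4, …, +∞}`. -/
def U7 : Set DC :=
  Set.univ \ ((Sum.inl '' {z : ℂ | ∃ k : ℕ, z = ((k + 1 : ℕ) : ℂ)}) ∪ {plusInfty})

/-- `N¹_∞(U7) = S¹∞ ∖ {+∞}`; hence `U7` is regular at `∞`
(`N¹_∞(U7) = U7 ∩ S¹∞`). -/
lemma compl_U7 : {z : ℂ | (Sum.inl z : DC) ∉ U7} = {z : ℂ | ∃ k : ℕ, z = ((k + 1 : ℕ) : ℂ)} := by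
  ext z
  simp [U7, plusInfty]

lemma term_eq (n : ℕ) :
    (1 + ‖((n + 1 : ℕ) : ℂ)‖)⁻¹ • ((n + 1 : ℕ) : ℂ) =
      Complex.ofReal (((n : ℝ) + 1) / ((n : ℝ) + 2)) := by
  have hne : ((n : ℝ) + 2) ≠ 0 := by positivity
  rw [Complex.norm_natCast, Complex.real_smul]
  push_cast
  have hcne : ((n : ℂ) + 2) ≠ 0 := by
    have h := Nat.cast_ne_zero (R := ℂ).mpr (by omega : n + 2 ≠ 0)
    push_cast at h
    exact h
  rw [eq_div_iff hcne]
  have h2 : (1 : ℂ) + (↑n + 1) = ↑n + 2 := by ring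
  rw [h2, inv_mul_eq_div, div_mul_eq_mul_div, mul_comm,
    mul_div_cancel_left₀ _ hcne]

lemma tendsto_inv_shift (c : ℝ) :
    Tendsto (fun k : ℕ => ((k : ℝ) + c)⁻¹) atTop (nhds 0) :=
  tendsto_inv_atTop_zero.comp (tendsto_atTop_add_const_right _ c tendsto_natCast_atTop_atTop)

lemma tendsto_ratio1 : Tendsto (fun k : ℕ => ((k : ℝ) + 1) / ((k : ℝ) + 2)) atTop (nhds 1) := by
  have heq : ∀ k : ℕ, ((k : ℝ) + 1) / ((k : ℝ) + 2) = 1 - ((k : ℝ) + 2)⁻¹ := by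
    intro k
    have hne : ((k : ℝ) + 2) ≠ 0 := by positivity
    field_simp
    ring
  simp only [heq]
  simpa using tendsto_const_nhds.sub (tendsto_inv_shift 2)

lemma tendsto_ratio2 : Tendsto (fun k : ℕ => ((k : ℝ) + 2) / ((k : ℝ) + 1)) atTop (nhds 1) := by
  have heq : ∀ k : ℕ, ((k : ℝ) + 2) / ((k : ℝ) + 1) = 1 + ((k : ℝ) + 1)⁻¹ := by
    intro k
    have hne : ((k : ℝ) + 1) ≠ 0 := by positivity
    field_simp
    ring
  simp only [heq]
  simpa using tendsto_const_nhds.add (tendsto_inv_shift 1)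

lemma clos_eq : closOneC {z : ℂ | (Sum.inl z : DC) ∉ U7} = {plusInfty} := by
  rw [compl_U7]
  ext p
  constructor
  · rintro ⟨⟨x, rfl⟩, z, hzA, hconv, -⟩
    have hw := (tendsto_inl_inr z x).mp hconv
    choose n hn using hzA
    have hterm : (fun k => (1 + ‖z k‖)⁻¹ • z k) =
        fun k => Complex.ofReal (((n k : ℝ) + 1) / ((n k : ℝ) + 2)) := by
      funext k; rw [hn k, term_eq]
    rw [hterm] at hw
    have him : (x : ℂ).im = 0 := by
      have h1 := (Complex.continuous_im.tendsto _).comp hw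
      simp only [Function.comp_def, Complex.ofReal_im] at h1
      exact (tendsto_nhds_unique tendsto_const_nhds h1).symm
    have hre0 : 0 ≤ (x : ℂ).re := by
      have h1 := (Complex.continuous_re.tendsto _).comp hw
      simp only [Function.comp_def, Complex.ofReal_re] at h1
      refine ge_of_tendsto' h1 fun k => ?_
      positivity
    have hxre : (x : ℂ) = Complex.ofReal (x : ℂ).re := by
      apply Complex.ext <;> simp [him]
    have hnorm : ‖(x : ℂ)‖ = 1 := mem_sphere_zero_iff_norm.mp x.2
    rw [hxre, Complex.norm_real, Real.norm_eq_abs, abs_of_nonneg hre0] at hnorm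
    have hx1 : (x : ℂ) = 1 := by rw [hxre, hnorm]; simp
    exact congrArg Sum.inr (Subtype.ext hx1)
  · rintro rfl
    refine ⟨⟨⟨1, by simp⟩, rfl⟩, fun k => ((k + 1 : ℕ) : ℂ), fun k => ⟨k, rfl⟩, ?_, ?_⟩
    · have hpi : plusInfty = Sum.inr (⟨1, by simp⟩ : Metric.sphere (0 : ℂ) 1) := rfl
      rw [hpi, tendsto_inl_inr]
      simp only [term_eq]
      simpa [Function.comp_def] using (Complex.continuous_ofReal.tendsto 1).comp tendsto_ratio1
    · have heq : (fun k => ‖(((k + 1 + 1 : ℕ) : ℂ))‖ / ‖(((k + 1 : ℕ) : ℂ))‖)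
          = fun k : ℕ => ((k : ℝ) + 2) / ((k : ℝ) + 1) := by
        funext k
        rw [Complex.norm_natCast, Complex.norm_natCast]
        push_cast
        ring_nf
      exact heq ▸ tendsto_ratio2

theorem U7_regular : NOneC U7 = Sinf \ {plusInfty} ∧ NOneC U7 = U7 ∩ Sinf := by
  have h1 : NOneC U7 = Sinf \ {plusInfty} := by
    rw [NOneC, clos_eq]
  refine ⟨h1, ?_⟩
  rw [h1]
  ext p
  cases p with
  | inl z => simp [Sinf, U7, plusInfty]
  | inr x =>
    simp only [Set.mem_diff, Set.mem_inter_iff, Sinf, Set.mem_range, Set.mem_singleton_iff,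
      U7, Set.mem_diff, Set.mem_univ, true_and, Set.mem_union, Set.mem_image]
    constructor
    · rintro ⟨-, hne⟩
      refine ⟨?_, ⟨x, rfl⟩⟩
      rintro (⟨w, -, h⟩ | h)
      · exact Sum.inl_ne_inr h
      · exact hne h
    · rintro ⟨h, -⟩
      exact ⟨⟨x, rfl⟩, fun hc => h (Or.inr hc)⟩
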